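/- Let P and Q be probability measures on a measurable space X with P ≪ Q and Radon–Nikodym derivative w* = dP/dQ, with w* > 0 Q-almost everywhere. Let k_p : X × X → ℝ be measurable with: (i) ∫ w*(x') k_p(x, x') dQ(x') = 0 and ∫ w*(x) k_p(x, x') dQ(x) = 0 for Q-almost every x, x'; (ii) ∫ (w*)² dQ < ∞; (iii) ∫ |w*(x)² k_p(x,x)| dQ(x) < ∞; (iv) ∫∫ (w*(x) w*(x') k_p(x,x'))² dQ(x) dQ(x') < ∞. Let x_1, x_2, … be i.i.d. with law Q, and define the self-normalized importance weights w*_i = w*(x_i) / ∑_{j=1}^n w*(x_j). Then the sequence n · S({x_i, w*_i}, p) is bounded in probability: for every ε > 0 there is a constant C such that for all n, ℙ( n · ∑_{i,j=1}^n w*_i w*_j k_p(x_i, x_j) > C ) ≤ ε. -/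

import Mathlib

open MeasureTheory Set Function

namespace Stmt4Aux

section Generic

variable {α β : Type*} [MeasurableSpace α] [MeasurableSpace β]

lemma integrable_comp_mp {μ : Measure α} {ν : Measure β} {φ : α → β}
    (hφ : MeasurePreserving φ μ ν) {g : β → ℝ} (hg : Integrable g ν) :
    Integrable (fun x => g (φ x)) μ := by
  rw [← memLp_one_iff_integrable] at hg ⊢
  exact hg.comp_measurePreserving hφ

lemma integral_comp_mp {μ : Measure α} {ν : Measure β} {φ : α → β}
    (hφ : MeasurePreserving φ μ ν) {g : β → ℝ} (hg : AEStronglyMeasurable g ν) :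
    ∫ x, g (φ x) ∂μ = ∫ y, g y ∂ν := by
  rw [← hφ.map_eq] at hg ⊢
  exact (integral_map hφ.measurable.aemeasurable hg).symm

lemma mp_fst {μ : Measure α} {ν : Measure β} [SFinite μ] [IsProbabilityMeasure ν] :
    MeasurePreserving (Prod.fst : α × β → α) (μ.prod ν) μ :=
  ⟨measurable_fst, by simp⟩

lemma mp_snd {μ : Measure α} {ν : Measure β} [IsProbabilityMeasure μ] [SFinite ν] :
    MeasurePreserving (Prod.snd : α × β → β) (μ.prod ν) ν :=
  ⟨measurable_snd, by simp⟩

lemma integrable_mul_of_sq {μ : Measure α} {F G : α → ℝ}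
    (hFG : AEStronglyMeasurable (fun x => F x * G x) μ)
    (hF : Integrable (fun x => F x ^ 2) μ) (hG : Integrable (fun x => G x ^ 2) μ) :
    Integrable (fun x => F x * G x) μ := by
  refine ((hF.add hG).div_const 2).mono' hFG (Filter.Eventually.of_forall fun x => ?_)
  simp only [Pi.add_apply]
  rw [Real.norm_eq_abs, abs_mul]
  nlinarith [sq_nonneg (|F x| - |G x|), sq_abs (F x), sq_abs (G x), abs_nonneg (F x),
    abs_nonneg (G x), mul_nonneg (abs_nonneg (F x)) (abs_nonneg (G x))]

lemma integrable_of_sq {μ' : Measure α} [IsFiniteMeasure μ'] {F : α → ℝ}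
    (hm : AEStronglyMeasurable F μ') (hF : Integrable (fun x => F x ^ 2) μ') :
    Integrable F μ' := by
  refine ((hF.add (integrable_const 1)).div_const 2).mono' hm
    (Filter.Eventually.of_forall fun x => ?_)
  simp only [Pi.add_apply]
  rw [Real.norm_eq_abs]
  nlinarith [sq_nonneg (|F x| - 1), sq_abs (F x), abs_nonneg (F x)]

end Generic


section Pi

variable {X : Type*} [MeasurableSpace X] (Q : Measure X) [IsProbabilityMeasure Q]

lemma mp_inj {m n : ℕ} (σ : Fin m → Fin n) (hσ : Function.Injective σ) :
    MeasurePreserving (fun ω : Fin n → X => ω ∘ σ)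
      (Measure.pi fun _ => Q) (Measure.pi fun _ => Q) := by
  classical
  have hmeas : Measurable (fun ω : Fin n → X => ω ∘ σ) :=
    measurable_pi_lambda _ fun i => measurable_pi_apply (σ i)
  refine ⟨hmeas, (Measure.pi_eq fun s hs => ?_).symm⟩
  rw [Measure.map_apply hmeas (MeasurableSet.univ_pi hs)]
  have hpre : ((fun ω : Fin n → X => ω ∘ σ) ⁻¹' Set.pi Set.univ s)
      = Set.pi Set.univ (fun j => if h : ∃ i, σ i = j then s h.choose else Set.univ) := by
    ext ω
    simp only [Set.mem_preimage, Set.mem_pi, Set.mem_univ, forall_true_left, Function.comp]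
    constructor
    · intro h j
      split_ifs with hj
      · exact Set.mem_of_eq_of_mem (congrArg ω hj.choose_spec.symm) (h hj.choose)
      · trivial
    · intro h i
      have h' := h (σ i)
      rw [dif_pos ⟨i, rfl⟩] at h'
      have hch : (⟨i, rfl⟩ : ∃ i', σ i' = σ i).choose = i :=
        hσ (⟨i, rfl⟩ : ∃ i', σ i' = σ i).choose_spec
      rwa [hch] at h'
  rw [hpre, Measure.pi_pi]
  have h1 : ∀ i : Fin m,
      (if h : ∃ i', σ i' = σ i then s h.choose else Set.univ) = s i := by
    intro i
    rw [dif_pos ⟨i, rfl⟩]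
    exact congrArg s (hσ (⟨i, rfl⟩ : ∃ i', σ i' = σ i).choose_spec)
  have h2 : ∀ j ∈ Finset.univ, j ∉ Finset.image σ Finset.univ →
      Q (if h : ∃ i, σ i = j then s h.choose else Set.univ) = 1 := by
    intro j _ hj
    rw [dif_neg, measure_univ]
    rintro ⟨i, rfl⟩
    exact hj (Finset.mem_image_of_mem σ (Finset.mem_univ i))
  calc ∏ j : Fin n, Q (if h : ∃ i, σ i = j then s h.choose else Set.univ)
      = ∏ j ∈ Finset.image σ Finset.univ,
          Q (if h : ∃ i, σ i = j then s h.choose else Set.univ) :=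
        (Finset.prod_subset (Finset.subset_univ _) h2).symm
    _ = ∏ i : Fin m, Q (if h : ∃ i', σ i' = σ i then s h.choose else Set.univ) :=
        Finset.prod_image (fun i _ j _ h => hσ h)
    _ = ∏ i : Fin m, Q (s i) := Finset.prod_congr rfl fun i _ => by rw [h1 i]

lemma mp_eval {n : ℕ} (i : Fin n) :
    MeasurePreserving (fun ω : Fin n → X => ω i) (Measure.pi fun _ => Q) Q := by
  have h1 := mp_inj Q (fun _ : Fin 1 => i) (fun a b _ => Subsingleton.elim a b)
  have h2 := measurePreserving_funUnique (β := X) Q (Fin 1)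
  exact h2.comp h1

lemma mp_pair {n : ℕ} {i j : Fin n} (hij : i ≠ j) :
    MeasurePreserving (fun ω : Fin n → X => (ω i, ω j))
      (Measure.pi fun _ => Q) (Q.prod Q) := by
  have hinj : Function.Injective (![i, j] : Fin 2 → Fin n) := by
    intro a b hab
    fin_cases a <;> fin_cases b <;> simp_all
  have h1 := mp_inj Q ![i, j] hinj
  have h2 := measurePreserving_finTwoArrow (α := X) Q
  exact h2.comp h1

lemma mp_cons {m : ℕ} :
    MeasurePreserving (fun v : Fin (m + 1) → X => (v 0, Fin.tail v))
      (Measure.pi fun _ : Fin (m + 1) => Q) (Q.prod (Measure.pi fun _ : Fin m => Q)) := by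
  have h := measurePreserving_piFinSuccAbove (fun _ : Fin (m + 1) => Q) 0
  have heq : ⇑(MeasurableEquiv.piFinSuccAbove (fun _ : Fin (m + 1) => X) 0)
      = fun v => (v 0, Fin.tail v) := by
    ext v : 1
    simp [MeasurableEquiv.piFinSuccAbove, Fin.tail, Fin.succAbove_zero]
  rw [heq] at h
  exact h

lemma mp_triple {n : ℕ} {i j k : Fin n} (hij : i ≠ j) (hik : i ≠ k) (hjk : j ≠ k) :
    MeasurePreserving (fun ω : Fin n → X => (ω i, (ω j, ω k)))
      (Measure.pi fun _ => Q) (Q.prod (Q.prod Q)) := by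
  have hinj : Function.Injective (![i, j, k] : Fin 3 → Fin n) := by
    intro a b hab
    fin_cases a <;> fin_cases b <;> simp_all
  have h1 := mp_inj Q ![i, j, k] hinj
  have h2 := mp_cons Q (m := 2)
  have h3 := (MeasurePreserving.id Q).prod (measurePreserving_finTwoArrow (α := X) Q)
  have := (h3.comp h2).comp h1
  convert this using 1
  funext ω; rfl

lemma mp_quad {n : ℕ} {i j k l : Fin n} (hij : i ≠ j) (hik : i ≠ k) (hil : i ≠ l)
    (hjk : j ≠ k) (hjl : j ≠ l) (hkl : k ≠ l) :
    MeasurePreserving (fun ω : Fin n → X => (ω i, (ω j, (ω k, ω l))))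
      (Measure.pi fun _ => Q) (Q.prod (Q.prod (Q.prod Q))) := by
  have hinj : Function.Injective (![i, j, k, l] : Fin 4 → Fin n) := by
    intro a b hab
    fin_cases a <;> fin_cases b <;> simp_all
  have h1 := mp_inj Q ![i, j, k, l] hinj
  have h2 := mp_cons Q (m := 3)
  have h3 := mp_cons Q (m := 2)
  have h4 := (MeasurePreserving.id Q).prod (measurePreserving_finTwoArrow (α := X) Q)
  have h5 := (MeasurePreserving.id Q).prod ((h4.comp h3))
  have := (h5.comp h2).comp h1
  convert this using 1
  funext ω; rfl

end Pi


section Kernel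

variable {X : Type*} [MeasurableSpace X] {Q : Measure X} [IsProbabilityMeasure Q]

lemma key3 {f g : X → X → ℝ}
    (hint : Integrable (fun z : X × X × X => f z.1 z.2.1 * g z.1 z.2.2) (Q.prod (Q.prod Q)))
    (h0 : ∀ᵐ s ∂Q, (∫ b, f s b ∂Q) * (∫ c, g s c ∂Q) = 0) :
    ∫ z : X × X × X, f z.1 z.2.1 * g z.1 z.2.2 ∂(Q.prod (Q.prod Q)) = 0 := by
  rw [MeasureTheory.integral_prod _ hint]
  apply integral_eq_zero_of_ae
  filter_upwards [h0] with s hs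
  show (∫ y : X × X, f s y.1 * g s y.2 ∂(Q.prod Q)) = 0
  rw [integral_prod_mul (f s) (g s)]
  exact hs

lemma key4 {f g : X → X → ℝ}
    (hint : Integrable (fun z : X × X × X × X => f z.1 z.2.1 * g z.2.2.1 z.2.2.2)
      (Q.prod (Q.prod (Q.prod Q))))
    (h0 : ∀ᵐ s ∂Q, (∫ b, f s b ∂Q) = 0) :
    ∫ z : X × X × X × X, f z.1 z.2.1 * g z.2.2.1 z.2.2.2 ∂(Q.prod (Q.prod (Q.prod Q))) = 0 := by
  rw [MeasureTheory.integral_prod _ hint]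
  apply integral_eq_zero_of_ae
  filter_upwards [h0] with s hs
  show (∫ y : X × X × X, f s y.1 * (fun cd : X × X => g cd.1 cd.2) y.2 ∂(Q.prod (Q.prod Q))) = 0
  rw [integral_prod_mul (f s) (fun cd : X × X => g cd.1 cd.2), hs, zero_mul]

lemma mHc {H : X → X → ℝ} (mH : Measurable (Function.uncurry H)) {γ : Type*} [MeasurableSpace γ]
    {u v : γ → X} (hu : Measurable u) (hv : Measurable v) :
    Measurable (fun a => H (u a) (v a)) := mH.comp (hu.prodMk hv)

lemma mp3a : MeasurePreserving (fun z : X × X × X => (z.1, z.2.1))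
    (Q.prod (Q.prod Q)) (Q.prod Q) := (MeasurePreserving.id Q).prod mp_fst

lemma mp3b : MeasurePreserving (fun z : X × X × X => (z.1, z.2.2))
    (Q.prod (Q.prod Q)) (Q.prod Q) := (MeasurePreserving.id Q).prod mp_snd

lemma mp3a' : MeasurePreserving (fun z : X × X × X => (z.2.1, z.1))
    (Q.prod (Q.prod Q)) (Q.prod Q) := Measure.measurePreserving_swap.comp mp3a

lemma mp3b' : MeasurePreserving (fun z : X × X × X => (z.2.2, z.1))
    (Q.prod (Q.prod Q)) (Q.prod Q) := Measure.measurePreserving_swap.comp mp3b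

lemma mp4a : MeasurePreserving (fun z : X × X × X × X => (z.1, z.2.1))
    (Q.prod (Q.prod (Q.prod Q))) (Q.prod Q) := (MeasurePreserving.id Q).prod mp_fst

lemma mp4b : MeasurePreserving (fun z : X × X × X × X => z.2.2)
    (Q.prod (Q.prod (Q.prod Q))) (Q.prod Q) := mp_snd.comp mp_snd

variable {H : X → X → ℝ}

lemma measA (mH : Measurable (Function.uncurry H)) :
    Measurable (fun z : X × X × X => H z.1 z.2.1 * H z.1 z.2.2) :=
  (mHc mH measurable_fst (measurable_fst.comp measurable_snd)).mul
    (mHc mH measurable_fst (measurable_snd.comp measurable_snd))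

lemma measB (mH : Measurable (Function.uncurry H)) :
    Measurable (fun z : X × X × X => H z.2.1 z.1 * H z.2.2 z.1) :=
  (mHc mH (measurable_fst.comp measurable_snd) measurable_fst).mul
    (mHc mH (measurable_snd.comp measurable_snd) measurable_fst)

lemma measC (mH : Measurable (Function.uncurry H)) :
    Measurable (fun z : X × X × X => H z.2.1 z.1 * H z.1 z.2.2) :=
  (mHc mH (measurable_fst.comp measurable_snd) measurable_fst).mul
    (mHc mH measurable_fst (measurable_snd.comp measurable_snd))

lemma measD (mH : Measurable (Function.uncurry H)) :
    Measurable (fun z : X × X × X => H z.1 z.2.1 * H z.2.2 z.1) :=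
  (mHc mH measurable_fst (measurable_fst.comp measurable_snd)).mul
    (mHc mH (measurable_snd.comp measurable_snd) measurable_fst)

lemma measE (mH : Measurable (Function.uncurry H)) :
    Measurable (fun z : X × X × X × X => H z.1 z.2.1 * H z.2.2.1 z.2.2.2) :=
  (mHc mH measurable_fst (measurable_fst.comp measurable_snd)).mul
    (mHc mH (measurable_fst.comp (measurable_snd.comp measurable_snd))
      (measurable_snd.comp (measurable_snd.comp measurable_snd)))

lemma zeroA (mH : Measurable (Function.uncurry H))
    (hH2 : Integrable (fun z : X × X => H z.1 z.2 ^ 2) (Q.prod Q))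
    (hA : ∀ᵐ a ∂Q, ∫ b, H a b ∂Q = 0) :
    ∫ z : X × X × X, H z.1 z.2.1 * H z.1 z.2.2 ∂(Q.prod (Q.prod Q)) = 0 := by
  refine key3 ?_ ?_
  · exact integrable_mul_of_sq (measA mH).aestronglyMeasurable
      (integrable_comp_mp mp3a hH2) (integrable_comp_mp mp3b hH2)
  · filter_upwards [hA] with s hs
    rw [hs, zero_mul]

lemma zeroB (mH : Measurable (Function.uncurry H))
    (hH2 : Integrable (fun z : X × X => H z.1 z.2 ^ 2) (Q.prod Q))
    (hB : ∀ᵐ b ∂Q, ∫ a, H a b ∂Q = 0) :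
    ∫ z : X × X × X, H z.2.1 z.1 * H z.2.2 z.1 ∂(Q.prod (Q.prod Q)) = 0 := by
  refine key3 (f := fun s b => H b s) (g := fun s c => H c s) ?_ ?_
  · exact integrable_mul_of_sq (measB mH).aestronglyMeasurable
      (integrable_comp_mp mp3a' hH2) (integrable_comp_mp mp3b' hH2)
  · filter_upwards [hB] with s hs
    rw [hs, zero_mul]

lemma zeroC (mH : Measurable (Function.uncurry H))
    (hH2 : Integrable (fun z : X × X => H z.1 z.2 ^ 2) (Q.prod Q))
    (hB : ∀ᵐ b ∂Q, ∫ a, H a b ∂Q = 0) :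
    ∫ z : X × X × X, H z.2.1 z.1 * H z.1 z.2.2 ∂(Q.prod (Q.prod Q)) = 0 := by
  refine key3 (f := fun s b => H b s) (g := H) ?_ ?_
  · exact integrable_mul_of_sq (measC mH).aestronglyMeasurable
      (integrable_comp_mp mp3a' hH2) (integrable_comp_mp mp3b hH2)
  · filter_upwards [hB] with s hs
    rw [hs, zero_mul]

lemma zeroD (mH : Measurable (Function.uncurry H))
    (hH2 : Integrable (fun z : X × X => H z.1 z.2 ^ 2) (Q.prod Q))
    (hA : ∀ᵐ a ∂Q, ∫ b, H a b ∂Q = 0) :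
    ∫ z : X × X × X, H z.1 z.2.1 * H z.2.2 z.1 ∂(Q.prod (Q.prod Q)) = 0 := by
  refine key3 (f := H) (g := fun s c => H c s) ?_ ?_
  · exact integrable_mul_of_sq (measD mH).aestronglyMeasurable
      (integrable_comp_mp mp3a hH2) (integrable_comp_mp mp3b' hH2)
  · filter_upwards [hA] with s hs
    rw [hs, zero_mul]

lemma zeroE (mH : Measurable (Function.uncurry H))
    (hH2 : Integrable (fun z : X × X => H z.1 z.2 ^ 2) (Q.prod Q))
    (hA : ∀ᵐ a ∂Q, ∫ b, H a b ∂Q = 0) :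
    ∫ z : X × X × X × X, H z.1 z.2.1 * H z.2.2.1 z.2.2.2
      ∂(Q.prod (Q.prod (Q.prod Q))) = 0 := by
  refine key4 (f := H) (g := H) ?_ hA
  exact integrable_mul_of_sq (measE mH).aestronglyMeasurable
    (integrable_comp_mp mp4a hH2) (integrable_comp_mp mp4b hH2)

lemma cross_zero (mH : Measurable (Function.uncurry H))
    (hH2 : Integrable (fun z : X × X => H z.1 z.2 ^ 2) (Q.prod Q))
    (hA : ∀ᵐ a ∂Q, ∫ b, H a b ∂Q = 0)
    (hB : ∀ᵐ b ∂Q, ∫ a, H a b ∂Q = 0)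
    {n : ℕ} {i j k l : Fin n} (hij : i ≠ j) (hkl : k ≠ l)
    (h1 : (k, l) ≠ (i, j)) (h2 : (k, l) ≠ (j, i)) :
    ∫ ω, H (ω i) (ω j) * H (ω k) (ω l) ∂(Measure.pi fun _ : Fin n => Q) = 0 := by
  by_cases hik : i = k
  · subst hik
    have hjl : j ≠ l := by rintro rfl; exact h1 rfl
    calc ∫ ω, H (ω i) (ω j) * H (ω i) (ω l) ∂(Measure.pi fun _ : Fin n => Q)
        = ∫ z : X × X × X, H z.1 z.2.1 * H z.1 z.2.2 ∂(Q.prod (Q.prod Q)) :=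
          integral_comp_mp (mp_triple Q hij hkl hjl)
            (measA mH).aestronglyMeasurable
      _ = 0 := zeroA mH hH2 hA
  · by_cases hil : i = l
    · subst hil
      have hjk : j ≠ k := by rintro rfl; exact h2 rfl
      calc ∫ ω, H (ω i) (ω j) * H (ω k) (ω i) ∂(Measure.pi fun _ : Fin n => Q)
          = ∫ z : X × X × X, H z.1 z.2.1 * H z.2.2 z.1 ∂(Q.prod (Q.prod Q)) :=
            integral_comp_mp (mp_triple Q hij (Ne.symm (fun h => hik h.symm)) hjk)
              (measD mH).aestronglyMeasurable
        _ = 0 := zeroD mH hH2 hA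
    · by_cases hjk : j = k
      · subst hjk
        calc ∫ ω, H (ω i) (ω j) * H (ω j) (ω l) ∂(Measure.pi fun _ : Fin n => Q)
            = ∫ z : X × X × X, H z.2.1 z.1 * H z.1 z.2.2 ∂(Q.prod (Q.prod Q)) :=
              integral_comp_mp (mp_triple Q hij.symm hkl (fun h => hil h))
                (measC mH).aestronglyMeasurable
          _ = 0 := zeroC mH hH2 hB
      · by_cases hjl : j = l
        · subst hjl
          calc ∫ ω, H (ω i) (ω j) * H (ω k) (ω j) ∂(Measure.pi fun _ : Fin n => Q)
              = ∫ z : X × X × X, H z.2.1 z.1 * H z.2.2 z.1 ∂(Q.prod (Q.prod Q)) :=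
                integral_comp_mp (mp_triple Q hij.symm (Ne.symm hkl) (fun h => hik h))
                  (measB mH).aestronglyMeasurable
            _ = 0 := zeroB mH hH2 hB
        · calc ∫ ω, H (ω i) (ω j) * H (ω k) (ω l) ∂(Measure.pi fun _ : Fin n => Q)
              = ∫ z : X × X × X × X, H z.1 z.2.1 * H z.2.2.1 z.2.2.2
                  ∂(Q.prod (Q.prod (Q.prod Q))) :=
                integral_comp_mp (mp_quad Q hij hik hil hjk hjl hkl)
                  (measE mH).aestronglyMeasurable
            _ = 0 := zeroE mH hH2 hA

end Kernel



section Moments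

variable {X : Type*} [MeasurableSpace X] {Q : Measure X} [IsProbabilityMeasure Q] {H : X → X → ℝ}

lemma markov_le {α : Type*} [MeasurableSpace α] {μ : Measure α} [IsProbabilityMeasure μ]
    {f : α → ℝ} (hf : Integrable f μ) (hf0 : 0 ≤ᵐ[μ] f) {c M : ℝ} (hc : 0 < c)
    (hM : ∫ x, f x ∂μ ≤ M) :
    μ {x | c ≤ f x} ≤ ENNReal.ofReal (M / c) := by
  have h := mul_meas_ge_le_integral_of_nonneg hf0 hf c
  have hne : μ {x | c ≤ f x} ≠ ⊤ := measure_ne_top μ _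
  rw [← ENNReal.ofReal_toReal hne]
  apply ENNReal.ofReal_le_ofReal
  rw [le_div_iff₀ hc]
  calc (μ {x | c ≤ f x}).toReal * c = c * (μ {x | c ≤ f x}).toReal := mul_comm _ _
    _ ≤ ∫ x, f x ∂μ := h
    _ ≤ M := hM

lemma same_value (mH : Measurable (Function.uncurry H))
    {n : ℕ} {i j : Fin n} (hij : i ≠ j) :
    ∫ ω, H (ω i) (ω j) ^ 2 ∂(Measure.pi fun _ : Fin n => Q)
      = ∫ z : X × X, H z.1 z.2 ^ 2 ∂(Q.prod Q) :=
  integral_comp_mp (mp_pair Q hij) (g := fun z : X × X => H z.1 z.2 ^ 2)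
    ((mHc mH measurable_fst measurable_snd).pow_const 2).aestronglyMeasurable

lemma swap_bound (mH : Measurable (Function.uncurry H))
    (hH2 : Integrable (fun z : X × X => H z.1 z.2 ^ 2) (Q.prod Q))
    {n : ℕ} {i j : Fin n} (hij : i ≠ j) :
    ∫ ω, H (ω i) (ω j) * H (ω j) (ω i) ∂(Measure.pi fun _ : Fin n => Q)
      ≤ ∫ z : X × X, H z.1 z.2 ^ 2 ∂(Q.prod Q) := by
  have hsw : Integrable (fun z : X × X => H z.2 z.1 ^ 2) (Q.prod Q) :=
    integrable_comp_mp Measure.measurePreserving_swap hH2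
  have hmeas : Measurable (fun z : X × X => H z.1 z.2 * H z.2 z.1) :=
    (mHc mH measurable_fst measurable_snd).mul (mHc mH measurable_snd measurable_fst)
  have hstep : ∫ ω, H (ω i) (ω j) * H (ω j) (ω i) ∂(Measure.pi fun _ : Fin n => Q)
      = ∫ z : X × X, H z.1 z.2 * H z.2 z.1 ∂(Q.prod Q) :=
    integral_comp_mp (mp_pair Q hij) (g := fun z : X × X => H z.1 z.2 * H z.2 z.1)
      hmeas.aestronglyMeasurable
  have hVsw : ∫ z : X × X, H z.2 z.1 ^ 2 ∂(Q.prod Q)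
      = ∫ z : X × X, H z.1 z.2 ^ 2 ∂(Q.prod Q) :=
    integral_comp_mp Measure.measurePreserving_swap
      (g := fun z : X × X => H z.1 z.2 ^ 2)
      ((mHc mH measurable_fst measurable_snd).pow_const 2).aestronglyMeasurable
  rw [hstep]
  have hle : ∫ z : X × X, H z.1 z.2 * H z.2 z.1 ∂(Q.prod Q)
      ≤ ∫ z : X × X, (H z.1 z.2 ^ 2 + H z.2 z.1 ^ 2) / 2 ∂(Q.prod Q) := by
    refine integral_mono (integrable_mul_of_sq hmeas.aestronglyMeasurable hH2 hsw)
      ((hH2.add hsw).div_const 2) (fun z => ?_)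
    nlinarith [sq_nonneg (H z.1 z.2 - H z.2 z.1)]
  have : ∫ z : X × X, (H z.1 z.2 ^ 2 + H z.2 z.1 ^ 2) / 2 ∂(Q.prod Q)
      = ∫ z : X × X, H z.1 z.2 ^ 2 ∂(Q.prod Q) := by
    rw [integral_div, integral_add hH2 hsw, hVsw]
    ring
  linarith

lemma offdiag_moment (mH : Measurable (Function.uncurry H))
    (hH2 : Integrable (fun z : X × X => H z.1 z.2 ^ 2) (Q.prod Q))
    (hA : ∀ᵐ a ∂Q, ∫ b, H a b ∂Q = 0)
    (hB : ∀ᵐ b ∂Q, ∫ a, H a b ∂Q = 0) (n : ℕ) :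
    Integrable (fun ω : Fin n → X =>
        (∑ i, ∑ j, if i = j then (0:ℝ) else H (ω i) (ω j)) ^ 2)
      (Measure.pi fun _ : Fin n => Q)
    ∧ ∫ ω, (∑ i, ∑ j, if i = j then (0:ℝ) else H (ω i) (ω j)) ^ 2
        ∂(Measure.pi fun _ : Fin n => Q)
      ≤ 2 * (n : ℝ) ^ 2 * ∫ z : X × X, H z.1 z.2 ^ 2 ∂(Q.prod Q) := by
  classical
  set V := ∫ z : X × X, H z.1 z.2 ^ 2 ∂(Q.prod Q) with hV
  have hV0 : 0 ≤ V := integral_nonneg fun z => sq_nonneg _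
  have hrw : ∀ ω : Fin n → X,
      (∑ i, ∑ j, if i = j then (0:ℝ) else H (ω i) (ω j)) ^ 2
      = ∑ p : Fin n × Fin n, ∑ q : Fin n × Fin n,
          (if p.1 = p.2 then (0:ℝ) else H (ω p.1) (ω p.2)) *
          (if q.1 = q.2 then (0:ℝ) else H (ω q.1) (ω q.2)) := by
    intro ω
    have h1 : (∑ i, ∑ j, if i = j then (0:ℝ) else H (ω i) (ω j))
        = ∑ p : Fin n × Fin n, (if p.1 = p.2 then (0:ℝ) else H (ω p.1) (ω p.2)) := by
      rw [← Finset.univ_product_univ, Finset.sum_product]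
    rw [pow_two, h1, Finset.sum_mul_sum]
  have hterm_int : ∀ p q : Fin n × Fin n, Integrable (fun ω : Fin n → X =>
      (if p.1 = p.2 then (0:ℝ) else H (ω p.1) (ω p.2)) *
      (if q.1 = q.2 then (0:ℝ) else H (ω q.1) (ω q.2))) (Measure.pi fun _ => Q) := by
    intro p q
    rcases eq_or_ne p.1 p.2 with hp | hp
    · simp [hp]
    · rcases eq_or_ne q.1 q.2 with hq | hq
      · simp [hq]
      · simp only [if_neg hp, if_neg hq]
        refine integrable_mul_of_sq ?_ ?_ ?_
        · exact ((mHc mH (measurable_pi_apply p.1) (measurable_pi_apply p.2)).mul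
            (mHc mH (measurable_pi_apply q.1) (measurable_pi_apply q.2))).aestronglyMeasurable
        · exact integrable_comp_mp (mp_pair Q hp) hH2
        · exact integrable_comp_mp (mp_pair Q hq) hH2
  have hint : Integrable (fun ω : Fin n → X =>
      (∑ i, ∑ j, if i = j then (0:ℝ) else H (ω i) (ω j)) ^ 2)
      (Measure.pi fun _ : Fin n => Q) := by
    have heq : (fun ω : Fin n → X =>
        (∑ i, ∑ j, if i = j then (0:ℝ) else H (ω i) (ω j)) ^ 2)
        = fun ω => ∑ p : Fin n × Fin n, ∑ q : Fin n × Fin n,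
          (if p.1 = p.2 then (0:ℝ) else H (ω p.1) (ω p.2)) *
          (if q.1 = q.2 then (0:ℝ) else H (ω q.1) (ω q.2)) := funext hrw
    rw [heq]
    exact integrable_finset_sum _ fun p _ => integrable_finset_sum _ fun q _ => hterm_int p q
  refine ⟨hint, ?_⟩
  have hterm_bd : ∀ p q : Fin n × Fin n,
      (∫ ω, (if p.1 = p.2 then (0:ℝ) else H (ω p.1) (ω p.2)) *
        (if q.1 = q.2 then (0:ℝ) else H (ω q.1) (ω q.2)) ∂(Measure.pi fun _ : Fin n => Q))
      ≤ if q = p ∨ q = (p.2, p.1) then V else 0 := by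
    intro p q
    have hite0 : (0:ℝ) ≤ if q = p ∨ q = (p.2, p.1) then V else 0 := by
      split <;> simp [hV0]
    rcases eq_or_ne p.1 p.2 with hp | hp
    · simpa [hp] using hite0
    · rcases eq_or_ne q.1 q.2 with hq | hq
      · simpa [hq] using hite0
      · simp only [if_neg hp, if_neg hq]
        rcases eq_or_ne q p with rfl | hqp
        · rw [if_pos (Or.inl rfl)]
          have h2 : ∫ ω, H (ω q.1) (ω q.2) * H (ω q.1) (ω q.2)
              ∂(Measure.pi fun _ : Fin n => Q)
              = ∫ ω, H (ω q.1) (ω q.2) ^ 2 ∂(Measure.pi fun _ : Fin n => Q) := by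
            congr 1
            funext ω
            ring
          rw [h2, same_value mH hq]
        · rcases eq_or_ne q (p.2, p.1) with rfl | hqsw
          · rw [if_pos (Or.inr rfl)]
            exact swap_bound mH hH2 hp
          · rw [if_neg (by push_neg; exact ⟨hqp, hqsw⟩)]
            refine le_of_eq (cross_zero mH hH2 hA hB hp hq ?_ ?_)
            · simpa using hqp
            · simpa using hqsw
  have hsplit : ∫ ω, (∑ i, ∑ j, if i = j then (0:ℝ) else H (ω i) (ω j)) ^ 2
      ∂(Measure.pi fun _ : Fin n => Q)
      = ∑ p : Fin n × Fin n, ∑ q : Fin n × Fin n,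
        ∫ ω, (if p.1 = p.2 then (0:ℝ) else H (ω p.1) (ω p.2)) *
          (if q.1 = q.2 then (0:ℝ) else H (ω q.1) (ω q.2))
          ∂(Measure.pi fun _ : Fin n => Q) := by
    rw [show (fun ω : Fin n → X =>
        (∑ i, ∑ j, if i = j then (0:ℝ) else H (ω i) (ω j)) ^ 2)
        = fun ω => ∑ p : Fin n × Fin n, ∑ q : Fin n × Fin n,
          (if p.1 = p.2 then (0:ℝ) else H (ω p.1) (ω p.2)) *
          (if q.1 = q.2 then (0:ℝ) else H (ω q.1) (ω q.2)) from funext hrw]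
    rw [integral_finset_sum _ fun p _ => integrable_finset_sum _ fun q _ => hterm_int p q]
    exact Finset.sum_congr rfl fun p _ => integral_finset_sum _ fun q _ => hterm_int p q
  rw [hsplit]
  calc ∑ p : Fin n × Fin n, ∑ q : Fin n × Fin n,
        ∫ ω, (if p.1 = p.2 then (0:ℝ) else H (ω p.1) (ω p.2)) *
          (if q.1 = q.2 then (0:ℝ) else H (ω q.1) (ω q.2))
          ∂(Measure.pi fun _ : Fin n => Q)
      ≤ ∑ p : Fin n × Fin n, ∑ q : Fin n × Fin n,
          (if q = p ∨ q = (p.2, p.1) then V else 0) :=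
        Finset.sum_le_sum fun p _ => Finset.sum_le_sum fun q _ => hterm_bd p q
    _ ≤ ∑ _p : Fin n × Fin n, 2 * V := by
        refine Finset.sum_le_sum fun p _ => ?_
        have hle : ∀ q : Fin n × Fin n, (if q = p ∨ q = (p.2, p.1) then V else 0)
            ≤ (if q = p then V else 0) + (if q = (p.2, p.1) then V else 0) := by
          intro q
          by_cases e1 : q = p <;> by_cases e2 : q = (p.2, p.1) <;>
            simp [e1, e2, hV0] <;> split_ifs <;> simp [hV0]
        calc ∑ q : Fin n × Fin n, (if q = p ∨ q = (p.2, p.1) then V else 0)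
            ≤ ∑ q : Fin n × Fin n,
              ((if q = p then V else 0) + (if q = (p.2, p.1) then V else 0)) :=
              Finset.sum_le_sum fun q _ => hle q
          _ = 2 * V := by
              rw [Finset.sum_add_distrib, Finset.sum_ite_eq' Finset.univ p fun _ => V,
                Finset.sum_ite_eq' Finset.univ (p.2, p.1) fun _ => V]
              simp
              ring
    _ = 2 * (n : ℝ) ^ 2 * V := by
        rw [Finset.sum_const]
        simp [Fintype.card_prod, nsmul_eq_mul]
        ring

lemma diag_moment (mH : Measurable (Function.uncurry H))
    (hd : Integrable (fun x => H x x) Q) (n : ℕ) :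
    Integrable (fun ω : Fin n → X => ∑ i, H (ω i) (ω i)) (Measure.pi fun _ : Fin n => Q) ∧
    ∫ ω, |∑ i, H (ω i) (ω i)| ∂(Measure.pi fun _ : Fin n => Q)
      ≤ (n : ℝ) * ∫ x, |H x x| ∂Q := by
  have hInt : ∀ i : Fin n, Integrable (fun ω : Fin n → X => H (ω i) (ω i))
      (Measure.pi fun _ : Fin n => Q) := fun i => integrable_comp_mp (mp_eval Q i) hd
  have h1 : Integrable (fun ω : Fin n → X => ∑ i, H (ω i) (ω i))
      (Measure.pi fun _ : Fin n => Q) := integrable_finset_sum _ fun i _ => hInt i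
  refine ⟨h1, ?_⟩
  calc ∫ ω, |∑ i, H (ω i) (ω i)| ∂(Measure.pi fun _ : Fin n => Q)
      ≤ ∫ ω, ∑ i, |H (ω i) (ω i)| ∂(Measure.pi fun _ : Fin n => Q) :=
        integral_mono h1.abs (integrable_finset_sum _ fun i _ => (hInt i).abs)
          fun ω => Finset.abs_sum_le_sum_abs _ _
    _ = ∑ i : Fin n, ∫ ω, |H (ω i) (ω i)| ∂(Measure.pi fun _ : Fin n => Q) :=
        integral_finset_sum _ fun i _ => (hInt i).abs
    _ = ∑ _i : Fin n, ∫ x, |H x x| ∂Q :=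
        Finset.sum_congr rfl fun i _ =>
          integral_comp_mp (mp_eval Q i) (g := fun x => |H x x|)
            ((mHc mH measurable_id measurable_id).abs).aestronglyMeasurable
    _ = (n : ℝ) * ∫ x, |H x x| ∂Q := by
        rw [Finset.sum_const]
        simp [nsmul_eq_mul]

lemma sum_centered_sq {g : X → ℝ} (mg : Measurable g)
    (hg2 : Integrable (fun x => g x ^ 2) Q) (hg0 : ∫ x, g x ∂Q = 0) (n : ℕ) :
    Integrable (fun ω : Fin n → X => (∑ i, g (ω i)) ^ 2) (Measure.pi fun _ : Fin n => Q) ∧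
    ∫ ω, (∑ i, g (ω i)) ^ 2 ∂(Measure.pi fun _ : Fin n => Q)
      ≤ (n : ℝ) * ∫ x, g x ^ 2 ∂Q := by
  classical
  set Vg := ∫ x, g x ^ 2 ∂Q with hVg
  have hVg0 : 0 ≤ Vg := integral_nonneg fun x => sq_nonneg _
  have hterm_int : ∀ i j : Fin n, Integrable (fun ω : Fin n → X => g (ω i) * g (ω j))
      (Measure.pi fun _ : Fin n => Q) := by
    intro i j
    refine integrable_mul_of_sq ?_ ?_ ?_
    · exact ((mg.comp (measurable_pi_apply i)).mul
        (mg.comp (measurable_pi_apply j))).aestronglyMeasurable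
    · exact integrable_comp_mp (mp_eval Q i) hg2
    · exact integrable_comp_mp (mp_eval Q j) hg2
  have hrw : ∀ ω : Fin n → X, (∑ i, g (ω i)) ^ 2 = ∑ i, ∑ j, g (ω i) * g (ω j) := by
    intro ω
    rw [pow_two, Finset.sum_mul_sum]
  have hint : Integrable (fun ω : Fin n → X => (∑ i, g (ω i)) ^ 2)
      (Measure.pi fun _ : Fin n => Q) := by
    rw [show (fun ω : Fin n → X => (∑ i, g (ω i)) ^ 2)
        = fun ω => ∑ i, ∑ j, g (ω i) * g (ω j) from funext hrw]
    exact integrable_finset_sum _ fun i _ => integrable_finset_sum _ fun j _ => hterm_int i j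
  refine ⟨hint, ?_⟩
  have hterm_bd : ∀ i j : Fin n,
      (∫ ω, g (ω i) * g (ω j) ∂(Measure.pi fun _ : Fin n => Q))
        ≤ if j = i then Vg else 0 := by
    intro i j
    rcases eq_or_ne j i with rfl | hij
    · rw [if_pos rfl]
      have h2 : ∫ ω, g (ω j) * g (ω j) ∂(Measure.pi fun _ : Fin n => Q)
          = ∫ ω, g (ω j) ^ 2 ∂(Measure.pi fun _ : Fin n => Q) := by
        congr 1; funext ω; ring
      rw [h2]
      exact le_of_eq (integral_comp_mp (mp_eval Q j) (g := fun x => g x ^ 2)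
        (mg.pow_const 2).aestronglyMeasurable)
    · rw [if_neg hij]
      refine le_of_eq ?_
      have hstep : ∫ ω, g (ω i) * g (ω j) ∂(Measure.pi fun _ : Fin n => Q)
          = ∫ z : X × X, g z.1 * g z.2 ∂(Q.prod Q) :=
        integral_comp_mp (mp_pair Q (Ne.symm hij)) (g := fun z : X × X => g z.1 * g z.2)
          ((mg.comp measurable_fst).mul (mg.comp measurable_snd)).aestronglyMeasurable
      rw [hstep, integral_prod_mul g g, hg0, zero_mul]
  have hsplit : ∫ ω, (∑ i, g (ω i)) ^ 2 ∂(Measure.pi fun _ : Fin n => Q)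
      = ∑ i : Fin n, ∑ j : Fin n, ∫ ω, g (ω i) * g (ω j)
          ∂(Measure.pi fun _ : Fin n => Q) := by
    rw [show (fun ω : Fin n → X => (∑ i, g (ω i)) ^ 2)
        = fun ω => ∑ i, ∑ j, g (ω i) * g (ω j) from funext hrw]
    rw [integral_finset_sum _ fun i _ => integrable_finset_sum _ fun j _ => hterm_int i j]
    exact Finset.sum_congr rfl fun i _ => integral_finset_sum _ fun j _ => hterm_int i j
  rw [hsplit]
  calc ∑ i : Fin n, ∑ j : Fin n, ∫ ω, g (ω i) * g (ω j) ∂(Measure.pi fun _ : Fin n => Q)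
      ≤ ∑ i : Fin n, ∑ j : Fin n, (if j = i then Vg else 0) :=
        Finset.sum_le_sum fun i _ => Finset.sum_le_sum fun j _ => hterm_bd i j
    _ = ∑ _i : Fin n, Vg := by
        refine Finset.sum_congr rfl fun i _ => ?_
        rw [Finset.sum_ite_eq' Finset.univ i fun _ => Vg]
        simp
    _ = (n : ℝ) * Vg := by
        rw [Finset.sum_const]
        simp [nsmul_eq_mul]

end Moments


section Arith

lemma arith_left {n W : ℝ} (hn1 : 1 ≤ n) (hW : W < n / 2) :
    (n / 2) ^ 2 ≤ (W - n) ^ 2 := by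
  have h1 : n / 2 ≤ -(W - n) := by linarith
  have h2 : (0:ℝ) ≤ n / 2 := by linarith
  calc (n / 2) ^ 2 ≤ (-(W - n)) ^ 2 := by nlinarith
    _ = (W - n) ^ 2 := neg_sq _

lemma arith_key {n C0 : ℝ} (hn1 : 1 ≤ n) (hC0pos : 0 < C0) (Wv D F : ℝ)
    (hWb : n / 2 ≤ Wv) (hYb : C0 < n * ((D + F) / Wv ^ 2)) :
    C0 * n / 8 ≤ |D| ∨ (C0 * n / 8) ^ 2 ≤ F ^ 2 := by
  have hWpos : (0:ℝ) < Wv := lt_of_lt_of_le (by linarith) hWb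
  have hWsq : (0:ℝ) < Wv ^ 2 := by positivity
  have h3' : C0 < n * (D + F) / Wv ^ 2 := by rw [mul_div_assoc]; exact hYb
  have h3 : C0 * Wv ^ 2 < n * (D + F) := (lt_div_iff₀ hWsq).mp h3'
  have hW2 : n ^ 2 / 4 ≤ Wv ^ 2 := by nlinarith
  have hTgt : C0 * n / 4 < D + F := by nlinarith
  rcases lt_or_ge D (C0 * n / 8) with hD | hD
  · right
    have hF : C0 * n / 8 < F := by linarith
    have h8 : (0:ℝ) ≤ C0 * n / 8 := by positivity
    nlinarith
  · left
    exact le_trans hD (le_abs_self _)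

lemma arith1 {ε Vg nr : ℝ} (hε : 0 < ε) (hVg0 : 0 ≤ Vg) (h12 : 12 * Vg < ε * nr)
    (hn1 : 1 ≤ nr) : nr * Vg / ((nr / 2) ^ 2) ≤ ε / 3 := by
  rw [div_le_iff₀ (by positivity)]
  nlinarith

lemma arith2 {ε M1 C0 nr : ℝ} (hε : 0 < ε) (hM10 : 0 ≤ M1) (h24 : 24 * M1 ≤ ε * C0)
    (hC0pos : 0 < C0) (hn1 : 1 ≤ nr) : nr * M1 / (C0 * nr / 8) ≤ ε / 3 := by
  rw [div_le_iff₀ (by positivity)]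
  nlinarith

lemma arith3 {ε V C0 nr : ℝ} (hε : 0 < ε) (hV0 : 0 ≤ V) (h384 : 384 * V ≤ ε * C0 ^ 2)
    (hC0pos : 0 < C0) (hn1 : 1 ≤ nr) : 2 * nr ^ 2 * V / ((C0 * nr / 8) ^ 2) ≤ ε / 3 := by
  rw [div_le_iff₀ (by positivity)]
  have hn0 : 0 < nr := by linarith
  nlinarith [mul_pos (mul_pos hn0 hn0) hC0pos, sq_nonneg (nr * C0), mul_pos hn0 hn0]

end Arith

end Stmt4Aux






open Stmt4Aux

/-- **Lemma of Section B.1**: the empirical kernelized Stein discrepancy of the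
self-normalized importance sampling weights `w*_i = w*(x_i)/∑_j w*(x_j)`, for
`x_1, …, x_n` i.i.d. from `Q` and `w* = dP/dQ`, is `O_p(n^{-1})`: the sequence
`n · S({x_i, w*_i}, p)` is bounded in probability. -/
theorem stmt4 {X : Type*} [MeasurableSpace X] (P Q : Measure X)
    [IsProbabilityMeasure P] [IsProbabilityMeasure Q]
    (w : X → ℝ) (hw : Measurable w)
    (hPQ : P = Q.withDensity (fun x => ENNReal.ofReal (w x)))
    (hwpos : ∀ᵐ x ∂Q, 0 < w x)
    (kp : X → X → ℝ) (hkp : Measurable (Function.uncurry kp))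
    (hdeg1 : ∀ᵐ x ∂Q, ∫ x', w x' * kp x x' ∂Q = 0)
    (hdeg2 : ∀ᵐ x' ∂Q, ∫ x, w x * kp x x' ∂Q = 0)
    (hw2 : Integrable (fun x => w x ^ 2) Q)
    (hdiag : Integrable (fun x => w x ^ 2 * kp x x) Q)
    (hprod : Integrable (fun z : X × X => (w z.1 * w z.2 * kp z.1 z.2) ^ 2) (Q.prod Q)) :
    ∀ ε > 0, ∃ C : ℝ, ∀ n : ℕ,
      (Measure.pi fun _ : Fin n => Q)
        {ω | C < (n : ℝ) * ∑ i, ∑ j,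
            (w (ω i) / ∑ k, w (ω k)) * (w (ω j) / ∑ k, w (ω k)) * kp (ω i) (ω j)}
        ≤ ENNReal.ofReal ε := by
  intro ε hε
  classical
  -- the kernel H
  set H : X → X → ℝ := fun a b => w a * w b * kp a b with hH
  have mH : Measurable (Function.uncurry H) :=
    ((hw.comp measurable_fst).mul (hw.comp measurable_snd)).mul hkp
  have hH2 : Integrable (fun z : X × X => H z.1 z.2 ^ 2) (Q.prod Q) := hprod
  have hA : ∀ᵐ a ∂Q, ∫ b, H a b ∂Q = 0 := by
    filter_upwards [hdeg1] with a ha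
    have hcongr : ∀ b, H a b = w a * (w b * kp a b) := fun b => by
      simp only [hH]; ring
    simp only [hcongr]
    rw [integral_const_mul, ha, mul_zero]
  have hB : ∀ᵐ b ∂Q, ∫ a, H a b ∂Q = 0 := by
    filter_upwards [hdeg2] with b hb
    have hcongr : ∀ a, H a b = w b * (w a * kp a b) := fun a => by
      simp only [hH]; ring
    simp only [hcongr]
    rw [integral_const_mul, hb, mul_zero]
  have hd_diag : Integrable (fun x => H x x) Q := by
    have hcongr : (fun x => H x x) = fun x => w x ^ 2 * kp x x := by
      funext x; simp only [hH]; ring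
    rw [hcongr]; exact hdiag
  -- the weight function
  have intw : Integrable w Q := integrable_of_sq hw.aestronglyMeasurable hw2
  have hEw : ∫ x, w x ∂Q = 1 := by
    have h0 : 0 ≤ᵐ[Q] w := hwpos.mono fun x hx => le_of_lt hx
    have h1 : ∫⁻ x, ENNReal.ofReal (w x) ∂Q = 1 := by
      have hu := measure_univ (μ := P)
      rw [hPQ, withDensity_apply _ MeasurableSet.univ, Measure.restrict_univ] at hu
      exact hu
    have h2 := integral_eq_lintegral_of_nonneg_ae h0 hw.aestronglyMeasurable
    rw [h2, h1]; simp
  set g : X → ℝ := fun x => w x - 1 with hg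
  have mg : Measurable g := hw.sub measurable_const
  have hg2 : Integrable (fun x => g x ^ 2) Q := by
    have hcongr : (fun x => g x ^ 2) = fun x => w x ^ 2 - 2 * w x + 1 := by
      funext x; simp only [hg]; ring
    rw [hcongr]
    exact (hw2.sub (intw.const_mul 2)).add (integrable_const 1)
  have hg0 : ∫ x, g x ∂Q = 0 := by
    simp only [hg]
    rw [integral_sub intw (integrable_const 1), hEw]
    simp
  -- constants
  set M1 : ℝ := ∫ x, |H x x| ∂Q with hM1
  have hM10 : 0 ≤ M1 := integral_nonneg fun x => abs_nonneg _
  set V : ℝ := ∫ z : X × X, H z.1 z.2 ^ 2 ∂(Q.prod Q) with hV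
  have hV0 : 0 ≤ V := integral_nonneg fun z => sq_nonneg _
  set Vg : ℝ := ∫ x, g x ^ 2 ∂Q with hVg
  have hVg0 : 0 ≤ Vg := integral_nonneg fun x => sq_nonneg _
  set N : ℕ := ⌈12 * Vg / ε⌉₊ + 1 with hN
  set C0 : ℝ := max 1 (max (24 * M1 / ε) (Real.sqrt (384 * V / ε))) with hC0
  have hC01 : (1:ℝ) ≤ C0 := le_max_left _ _
  have hC0pos : (0:ℝ) < C0 := lt_of_lt_of_le one_pos hC01
  have hC0a : 24 * M1 / ε ≤ C0 := le_trans (le_max_left _ _) (le_max_right _ _)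
  have hC0b : Real.sqrt (384 * V / ε) ≤ C0 := le_trans (le_max_right _ _) (le_max_right _ _)
  have hC0sq : 384 * V / ε ≤ C0 ^ 2 := by
    have h1 : Real.sqrt (384 * V / ε) ^ 2 ≤ C0 ^ 2 :=
      pow_le_pow_left₀ (Real.sqrt_nonneg _) hC0b 2
    rwa [Real.sq_sqrt (by positivity)] at h1
  -- measurability of the statistic
  have mY : ∀ n : ℕ, Measurable (fun ω : Fin n → X => (n : ℝ) * ∑ i, ∑ j,
      (w (ω i) / ∑ k, w (ω k)) * (w (ω j) / ∑ k, w (ω k)) * kp (ω i) (ω j)) := by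
    intro n
    have hWm : Measurable (fun ω : Fin n → X => ∑ k, w (ω k)) :=
      Finset.measurable_sum _ fun k _ => hw.comp (measurable_pi_apply k)
    refine Measurable.const_mul ?_ _
    refine Finset.measurable_sum _ fun i _ => ?_
    refine Finset.measurable_sum _ fun j _ => ?_
    have h1 : Measurable (fun ω : Fin n → X => w (ω i)) := hw.comp (measurable_pi_apply i)
    have h2 : Measurable (fun ω : Fin n → X => w (ω j)) := hw.comp (measurable_pi_apply j)
    have h3 : Measurable (fun ω : Fin n → X => kp (ω i) (ω j)) := by
      exact hkp.comp (f := fun ω : Fin n → X => (ω i, ω j))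
        ((measurable_pi_apply i).prodMk (measurable_pi_apply j))
    exact ((h1.div hWm).mul (h2.div hWm)).mul h3
  -- per-n tightness
  have per_n : ∀ n : ℕ, ∃ c : ℝ, (Measure.pi fun _ : Fin n => Q)
      {ω | c < (n : ℝ) * ∑ i, ∑ j,
        (w (ω i) / ∑ k, w (ω k)) * (w (ω j) / ∑ k, w (ω k)) * kp (ω i) (ω j)}
      ≤ ENNReal.ofReal ε := by
    intro n
    set Y : (Fin n → X) → ℝ := fun ω => (n : ℝ) * ∑ i, ∑ j,
      (w (ω i) / ∑ k, w (ω k)) * (w (ω j) / ∑ k, w (ω k)) * kp (ω i) (ω j) with hYdef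
    have hanti : Antitone (fun m : ℕ => {ω : Fin n → X | (m : ℝ) < Y ω}) := by
      intro a b hab ω hω
      simp only [Set.mem_setOf_eq] at hω ⊢
      exact lt_of_le_of_lt (by exact_mod_cast hab) hω
    have hiempty : ⋂ m : ℕ, {ω : Fin n → X | (m : ℝ) < Y ω} = ∅ := by
      ext ω
      simp only [Set.mem_iInter, Set.mem_setOf_eq, Set.mem_empty_iff_false, iff_false, not_forall,
        not_lt]
      obtain ⟨m, hm⟩ := exists_nat_gt (Y ω)
      exact ⟨m, hm.le⟩
    have htend := tendsto_measure_iInter_atTop (μ := Measure.pi fun _ : Fin n => Q)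
      (fun m => (measurableSet_lt measurable_const (mY n)).nullMeasurableSet)
      hanti ⟨0, measure_ne_top _ _⟩
    rw [hiempty, measure_empty] at htend
    have hev := htend.eventually_lt_const (show (0:ENNReal) < ENNReal.ofReal ε from
      ENNReal.ofReal_pos.mpr hε)
    obtain ⟨m, hm⟩ := hev.exists
    exact ⟨(m : ℝ), hm.le⟩
  -- uniform bound for large n
  have large : ∀ n : ℕ, N ≤ n → (Measure.pi fun _ : Fin n => Q)
      {ω | C0 < (n : ℝ) * ∑ i, ∑ j,
        (w (ω i) / ∑ k, w (ω k)) * (w (ω j) / ∑ k, w (ω k)) * kp (ω i) (ω j)}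
      ≤ ENNReal.ofReal ε := by
    intro n hn
    have hn1 : (1:ℝ) ≤ (n:ℝ) := by
      have : 1 ≤ n := le_trans (Nat.succ_le_succ (Nat.zero_le _)) hn
      exact_mod_cast this
    have hn0 : (0:ℝ) < n := lt_of_lt_of_le one_pos hn1
    obtain ⟨hFint, hFbd⟩ := offdiag_moment (Q := Q) mH hH2 hA hB n
    obtain ⟨hDint, hDbd⟩ := diag_moment (Q := Q) mH hd_diag n
    obtain ⟨hSint, hSbd⟩ := sum_centered_sq (Q := Q) mg hg2 hg0 n
    set Sn : (Fin n → X) → ℝ := fun ω => ∑ i, g (ω i) with hSn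
    set Dn : (Fin n → X) → ℝ := fun ω => ∑ i, H (ω i) (ω i) with hDn
    set Fn : (Fin n → X) → ℝ := fun ω => ∑ i, ∑ j, if i = j then (0:ℝ) else H (ω i) (ω j)
      with hFn
    -- inclusion of events
    have hsub : {ω : Fin n → X | C0 < (n : ℝ) * ∑ i, ∑ j,
        (w (ω i) / ∑ k, w (ω k)) * (w (ω j) / ∑ k, w (ω k)) * kp (ω i) (ω j)}
        ⊆ {ω : Fin n → X | ((n:ℝ)/2)^2 ≤ (Sn ω)^2} ∪
          ({ω : Fin n → X | C0 * n / 8 ≤ |Dn ω|} ∪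
            {ω : Fin n → X | (C0 * n / 8)^2 ≤ (Fn ω)^2}) := by
      intro ω hω
      simp only [Set.mem_setOf_eq] at hω
      simp only [Set.mem_union, Set.mem_setOf_eq]
      set W : ℝ := ∑ k, w (ω k) with hW
      by_cases hWsmall : W < (n:ℝ)/2
      · left
        have hSneq : Sn ω = W - n := by
          simp only [hSn, hg, hW]
          rw [Finset.sum_sub_distrib]
          simp [Finset.card_univ]
        rw [hSneq]
        exact arith_left hn1 hWsmall
      · right
        push_neg at hWsmall
        have hWpos : (0:ℝ) < W := lt_of_lt_of_le (by positivity) hWsmall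
        have hWne : W ≠ 0 := ne_of_gt hWpos
        have hYeq : (n : ℝ) * ∑ i, ∑ j,
            w (ω i) / W * (w (ω j) / W) * kp (ω i) (ω j)
            = (n:ℝ) * ((∑ i, ∑ j, H (ω i) (ω j)) / W^2) := by
          congr 1
          rw [Finset.sum_div]
          refine Finset.sum_congr rfl fun i _ => ?_
          rw [Finset.sum_div]
          refine Finset.sum_congr rfl fun j _ => ?_
          simp only [hH]
          rw [div_mul_div_comm, div_mul_eq_mul_div, pow_two]
        have hT : (∑ i, ∑ j, H (ω i) (ω j)) = Dn ω + Fn ω := by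
          have hsplit2 : ∀ i j : Fin n, H (ω i) (ω j)
              = (if i = j then H (ω i) (ω j) else 0)
                + (if i = j then (0:ℝ) else H (ω i) (ω j)) := by
            intro i j; split_ifs <;> ring
          calc (∑ i, ∑ j, H (ω i) (ω j))
              = ∑ i, ∑ j, ((if i = j then H (ω i) (ω j) else 0)
                + (if i = j then (0:ℝ) else H (ω i) (ω j))) := by
                refine Finset.sum_congr rfl fun i _ => Finset.sum_congr rfl fun j _ => ?_
                exact hsplit2 i j
            _ = (∑ i, ∑ j, if i = j then H (ω i) (ω j) else 0) + Fn ω := by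
                simp only [hFn]
                rw [← Finset.sum_add_distrib]
                refine Finset.sum_congr rfl fun i _ => ?_
                rw [← Finset.sum_add_distrib]
            _ = Dn ω + Fn ω := by
                congr 1
                simp only [hDn]
                refine Finset.sum_congr rfl fun i _ => ?_
                rw [Finset.sum_ite_eq Finset.univ i (fun j => H (ω i) (ω j))]
                simp
        rw [hYeq, hT] at hω
        exact arith_key hn1 hC0pos W (Dn ω) (Fn ω) hWsmall hω
    -- measure bounds for the three events
    have hb1 : (Measure.pi fun _ : Fin n => Q) {ω : Fin n → X | ((n:ℝ)/2)^2 ≤ (Sn ω)^2}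
        ≤ ENNReal.ofReal (ε/3) := by
      have hm := markov_le hSint (Filter.Eventually.of_forall fun ω => sq_nonneg _)
        (show (0:ℝ) < ((n:ℝ)/2)^2 by positivity) hSbd
      refine le_trans hm (ENNReal.ofReal_le_ofReal ?_)
      have hNgt : 12 * Vg / ε < (N:ℝ) := by
        have h1 : 12 * Vg / ε ≤ (⌈12 * Vg / ε⌉₊ : ℝ) := Nat.le_ceil _
        have h2 : ((⌈12 * Vg / ε⌉₊ : ℕ) : ℝ) < N := by
          rw [hN]; push_cast; linarith
        linarith
      have hNn : 12 * Vg / ε < (n:ℝ) := lt_of_lt_of_le hNgt (by exact_mod_cast hn)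
      have h12 : 12 * Vg < ε * n := by
        rw [div_lt_iff₀ hε] at hNn; linarith
      exact arith1 hε hVg0 h12 hn1
    have hb2 : (Measure.pi fun _ : Fin n => Q) {ω : Fin n → X | C0 * n / 8 ≤ |Dn ω|}
        ≤ ENNReal.ofReal (ε/3) := by
      have hm := markov_le hDint.abs (Filter.Eventually.of_forall fun ω => abs_nonneg _)
        (show (0:ℝ) < C0 * n / 8 by positivity) hDbd
      refine le_trans hm (ENNReal.ofReal_le_ofReal ?_)
      have h24 : 24 * M1 ≤ ε * C0 := by
        rw [div_le_iff₀ hε] at hC0a; linarith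
      exact arith2 hε hM10 h24 hC0pos hn1
    have hb3 : (Measure.pi fun _ : Fin n => Q) {ω : Fin n → X | (C0 * n / 8)^2 ≤ (Fn ω)^2}
        ≤ ENNReal.ofReal (ε/3) := by
      have hm := markov_le hFint (Filter.Eventually.of_forall fun ω => sq_nonneg _)
        (show (0:ℝ) < (C0 * n / 8)^2 by positivity) hFbd
      refine le_trans hm (ENNReal.ofReal_le_ofReal ?_)
      have h384 : 384 * V ≤ ε * C0^2 := by
        rw [div_le_iff₀ hε] at hC0sq; linarith
      exact arith3 hε hV0 h384 hC0pos hn1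
    calc (Measure.pi fun _ : Fin n => Q) {ω : Fin n → X | C0 < (n : ℝ) * ∑ i, ∑ j,
          (w (ω i) / ∑ k, w (ω k)) * (w (ω j) / ∑ k, w (ω k)) * kp (ω i) (ω j)}
        ≤ (Measure.pi fun _ : Fin n => Q) ({ω : Fin n → X | ((n:ℝ)/2)^2 ≤ (Sn ω)^2} ∪
            ({ω : Fin n → X | C0 * n / 8 ≤ |Dn ω|} ∪
              {ω : Fin n → X | (C0 * n / 8)^2 ≤ (Fn ω)^2})) := measure_mono hsub
      _ ≤ (Measure.pi fun _ : Fin n => Q) {ω : Fin n → X | ((n:ℝ)/2)^2 ≤ (Sn ω)^2}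
            + ((Measure.pi fun _ : Fin n => Q) {ω : Fin n → X | C0 * n / 8 ≤ |Dn ω|}
            + (Measure.pi fun _ : Fin n => Q) {ω : Fin n → X | (C0 * n / 8)^2 ≤ (Fn ω)^2}) :=
          le_trans (measure_union_le _ _) (add_le_add le_rfl (measure_union_le _ _))
      _ ≤ ENNReal.ofReal (ε/3) + (ENNReal.ofReal (ε/3) + ENNReal.ofReal (ε/3)) :=
          add_le_add hb1 (add_le_add hb2 hb3)
      _ = ENNReal.ofReal ε := by
          rw [← ENNReal.ofReal_add (by positivity) (by positivity),
            ← ENNReal.ofReal_add (by positivity) (by positivity)]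
          norm_num
          congr 1
          ring
  -- assemble the final constant
  choose Cs hCs using per_n
  refine ⟨C0 + ∑ m ∈ Finset.range N, max (Cs m) 0, fun n => ?_⟩
  have hsum0 : (0:ℝ) ≤ ∑ m ∈ Finset.range N, max (Cs m) 0 :=
    Finset.sum_nonneg fun m _ => le_max_right _ _
  by_cases hn : N ≤ n
  · refine le_trans (measure_mono ?_) (large n hn)
    intro ω hω
    simp only [Set.mem_setOf_eq] at hω ⊢
    linarith
  · push_neg at hn
    refine le_trans (measure_mono ?_) (hCs n)
    intro ω hω
    simp only [Set.mem_setOf_eq] at hω ⊢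
    have h1 : Cs n ≤ max (Cs n) 0 := le_max_left _ _
    have h2 : max (Cs n) 0 ≤ ∑ m ∈ Finset.range N, max (Cs m) 0 :=
      Finset.single_le_sum (f := fun m => max (Cs m) 0)
        (fun m _ => le_max_right _ _) (Finset.mem_range.mpr hn)
    linarith
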